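/- Let α > 0, h > 0, and t ∈ ℝ with −α·h < t < 0. Let r, c, d be real numbers with c < 0, d ≥ (α²/2)·h·r, and c² − 2·h·r·d ≥ 0. Then c − t·r < 0. -/
import Mathlib

/-- numerical content of Lemma B.3 of the paper: central charges of
semistable objects only "move to the left".  Let `α > 0`, `h > 0`, `−α·h < t < 0`, and
let `r, c, d` be reals with `c < 0`, `d ≥ (α²/2)·h·r` and `c² − 2·h·r·d ≥ 0`.
Then `c − t·r < 0`. -/
theorem stmt_17 (α h t r c d : ℝ) (hα : 0 < α) (hh : 0 < h)
    (ht1 : -α * h < t) (ht2 : t < 0) (hc : c < 0)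
    (hd : α ^ 2 / 2 * h * r ≤ d) (hdisc : 0 ≤ c ^ 2 - 2 * h * r * d) :
    c - t * r < 0 := by
  rcases le_or_gt r 0 with hr | hr
  · nlinarith [mul_nonneg (le_of_lt (neg_pos.mpr ht2)) (neg_nonneg.mpr hr)]
  · -- c² ≥ 2hr d ≥ α² h² r², c < 0 ⇒ c ≤ -αhr
    have h1 : α ^ 2 * h ^ 2 * r ^ 2 ≤ c ^ 2 := by nlinarith [mul_le_mul_of_nonneg_left hd (by positivity : (0:ℝ) ≤ 2 * h * r)]
    have h2 : c ≤ -(α * h * r) := by nlinarith [mul_pos (mul_pos hα hh) hr]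
    nlinarith
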